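/- Let m, n, l ≥ 1, let H₁ ∈ ℂ^{n×m} and H₂ ∈ ℂ^{l×n}, and let P₁, P₂ > 0. Suppose b₁ ∈ ℂ^m is a unit vector with P₁‖H₁b₁‖² = sup{ P₁‖H₁s‖² : ‖s‖ = 1 } =: γ₁⋆ > 0, and g₁ ∈ ℂ^n is a unit vector with P₂‖H₂g₁‖² = sup{ P₂‖H₂w‖² : ‖w‖ = 1 } =: γ₂⋆ > 0. Set a₁ = H₁b₁/‖H₁b₁‖, f₁ = H₂g₁/‖H₂g₁‖, σ = (1 + P₁‖H₁b₁‖²)^{-1/2}, and W⋆ = σ·g₁a₁ᴴ (a rank-one matrix). Then the triple (s, r, W) = (b₁, f₁, W⋆) satisfies ‖b₁‖ = ‖f₁‖ = 1 and P₁‖W⋆H₁b₁‖² + ‖W⋆‖_F² = 1, and the objective P₁P₂|f₁ᴴH₂W⋆H₁b₁|² / (P₂‖W⋆ᴴH₂ᴴf₁‖² + 1) equals γ₁⋆γ₂⋆ / (1 + γ₁⋆ + γ₂⋆). -/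

import Mathlib

/-- Euclidean norm of a complex vector. -/
noncomputable def cnorm {k : ℕ} (v : Fin k → ℂ) : ℝ :=
  Real.sqrt (∑ i, ‖v i‖ ^ 2)

/-- Squared Frobenius norm of a complex matrix. -/
noncomputable def frobSq {p q : ℕ} (A : Matrix (Fin p) (Fin q) ℂ) : ℝ :=
  ∑ i, ∑ j, ‖A i j‖ ^ 2

lemma cnorm_nonneg {k : ℕ} (v : Fin k → ℂ) : 0 ≤ cnorm v := Real.sqrt_nonneg _

lemma cnorm_sq {k : ℕ} (v : Fin k → ℂ) : cnorm v ^ 2 = ∑ i, ‖v i‖ ^ 2 :=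
  Real.sq_sqrt (by positivity)

lemma cnorm_smul {k : ℕ} (c : ℂ) (v : Fin k → ℂ) : cnorm (c • v) = ‖c‖ * cnorm v := by
  unfold cnorm
  rw [show ∑ i, ‖(c • v) i‖ ^ 2 = ‖c‖ ^ 2 * ∑ i, ‖v i‖ ^ 2 by
    simp [Finset.mul_sum, mul_pow, norm_mul]]
  rw [Real.sqrt_mul (by positivity), Real.sqrt_sq (norm_nonneg c)]

lemma dot_star_self {k : ℕ} (v : Fin k → ℂ) :
    dotProduct (star v) v = ((cnorm v ^ 2 : ℝ) : ℂ) := by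
  rw [cnorm_sq]
  push_cast
  simp only [dotProduct, Pi.star_apply]
  congr 1
  ext i
  rw [Complex.star_def, Complex.conj_mul']

lemma vecMulVec_mulVec {p q : ℕ} (g : Fin p → ℂ) (a x : Fin q → ℂ) :
    (Matrix.vecMulVec g a).mulVec x = (dotProduct a x) • g := by
  ext i
  simp only [Matrix.mulVec, Matrix.vecMulVec_apply, dotProduct, Pi.smul_apply,
    smul_eq_mul, Finset.sum_mul]
  exact Finset.sum_congr rfl fun j _ => by ring


/-- If `b₁` and `g₁` are strongest right singular vectors (unit maximizers of the channel
gains) of `H₁` and `H₂`, then the matched beamforming triple `(b₁, f₁, W⋆)` with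
`W⋆ = σ g₁ a₁ᴴ`, `σ = (1 + P₁‖H₁b₁‖²)^{-1/2}`, satisfies the power constraints and
achieves the relay SNR `γ₁⋆γ₂⋆ / (1 + γ₁⋆ + γ₂⋆)`. -/
theorem stmt1 (m n l : ℕ) (hm : 1 ≤ m) (hn : 1 ≤ n) (hl : 1 ≤ l)
    (H₁ : Matrix (Fin n) (Fin m) ℂ) (H₂ : Matrix (Fin l) (Fin n) ℂ)
    (P₁ P₂ : ℝ) (hP₁ : 0 < P₁) (hP₂ : 0 < P₂)
    (b₁ : Fin m → ℂ) (g₁ : Fin n → ℂ)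
    (hb₁u : cnorm b₁ = 1) (hg₁u : cnorm g₁ = 1)
    (γ₁ γ₂ : ℝ)
    (hγ₁def : γ₁ = P₁ * cnorm (H₁.mulVec b₁) ^ 2)
    (hγ₂def : γ₂ = P₂ * cnorm (H₂.mulVec g₁) ^ 2)
    (hγ₁sup : γ₁ = sSup {x : ℝ | ∃ s : Fin m → ℂ,
        cnorm s = 1 ∧ x = P₁ * cnorm (H₁.mulVec s) ^ 2})
    (hγ₂sup : γ₂ = sSup {x : ℝ | ∃ w : Fin n → ℂ,
        cnorm w = 1 ∧ x = P₂ * cnorm (H₂.mulVec w) ^ 2})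
    (hγ₁pos : 0 < γ₁) (hγ₂pos : 0 < γ₂)
    (a₁ : Fin n → ℂ) (f₁ : Fin l → ℂ) (σ : ℝ) (W : Matrix (Fin n) (Fin n) ℂ)
    (ha₁ : a₁ = ((cnorm (H₁.mulVec b₁) : ℂ))⁻¹ • H₁.mulVec b₁)
    (hf₁ : f₁ = ((cnorm (H₂.mulVec g₁) : ℂ))⁻¹ • H₂.mulVec g₁)
    (hσ : σ = (Real.sqrt (1 + P₁ * cnorm (H₁.mulVec b₁) ^ 2))⁻¹)
    (hW : W = (σ : ℂ) • Matrix.vecMulVec g₁ (star a₁)) :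
    cnorm b₁ = 1 ∧ cnorm f₁ = 1 ∧
    P₁ * cnorm (W.mulVec (H₁.mulVec b₁)) ^ 2 + frobSq W = 1 ∧
    P₁ * P₂ * ‖dotProduct (star f₁) (H₂.mulVec (W.mulVec (H₁.mulVec b₁)))‖ ^ 2 /
        (P₂ * cnorm ((W.conjTranspose).mulVec ((H₂.conjTranspose).mulVec f₁)) ^ 2 + 1) =
      γ₁ * γ₂ / (1 + γ₁ + γ₂) := by
  have hα0 : 0 < cnorm (H₁.mulVec b₁) := by
    rcases (cnorm_nonneg (H₁.mulVec b₁)).lt_or_eq with h | h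
    · exact h
    · exfalso; rw [hγ₁def, ← h] at hγ₁pos; simp at hγ₁pos
  have hβ0 : 0 < cnorm (H₂.mulVec g₁) := by
    rcases (cnorm_nonneg (H₂.mulVec g₁)).lt_or_eq with h | h
    · exact h
    · exfalso; rw [hγ₂def, ← h] at hγ₂pos; simp at hγ₂pos
  set u := H₁.mulVec b₁ with hu
  set v := H₂.mulVec g₁ with hv
  set α := cnorm u with hαdef
  set β := cnorm v with hβdef
  have hαC : ((α : ℝ) : ℂ) ≠ 0 := Complex.ofReal_ne_zero.mpr hα0.ne'
  have hβC : ((β : ℝ) : ℂ) ≠ 0 := Complex.ofReal_ne_zero.mpr hβ0.ne'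
  have htpos : 0 < 1 + P₁ * α ^ 2 := by positivity
  have hσ0 : 0 < σ := by
    rw [hσ]
    exact inv_pos.mpr (Real.sqrt_pos.mpr htpos)
  have hσsq : σ ^ 2 = (1 + P₁ * α ^ 2)⁻¹ := by
    rw [hσ, inv_pow, Real.sq_sqrt htpos.le]
  have hs : σ ^ 2 * (1 + P₁ * α ^ 2) = 1 := by
    rw [hσsq]; field_simp
  have ha₁n : cnorm a₁ = 1 := by
    rw [ha₁, cnorm_smul, norm_inv, Complex.norm_real, Real.norm_eq_abs, abs_of_pos hα0]
    exact inv_mul_cancel₀ hα0.ne'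
  have hf₁n : cnorm f₁ = 1 := by
    rw [hf₁, cnorm_smul, norm_inv, Complex.norm_real, Real.norm_eq_abs, abs_of_pos hβ0]
    exact inv_mul_cancel₀ hβ0.ne'
  have hdotu : dotProduct (star a₁) u = (α : ℂ) := by
    rw [ha₁, star_smul, smul_dotProduct, dot_star_self]
    simp only [star_inv₀, Complex.star_def, Complex.conj_ofReal, smul_eq_mul]
    push_cast
    field_simp
    ring
  have hdotfv : dotProduct (star f₁) v = (β : ℂ) := by
    rw [hf₁, star_smul, smul_dotProduct, dot_star_self]
    simp only [star_inv₀, Complex.star_def, Complex.conj_ofReal, smul_eq_mul]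
    push_cast
    field_simp
    ring
  have hdotvf : dotProduct (star v) f₁ = (β : ℂ) := by
    rw [hf₁, dotProduct_smul, dot_star_self]
    push_cast
    rw [← hβdef]
    field_simp
    rw [smul_eq_mul, one_div, pow_two, ← mul_assoc, inv_mul_cancel₀ hβC, one_mul]
  have hWu : W.mulVec u = ((σ * α : ℝ) : ℂ) • g₁ := by
    rw [hW, Matrix.smul_mulVec, vecMulVec_mulVec, hdotu, smul_smul]
    norm_cast
  have hg₁sq : ∑ i, ‖g₁ i‖ ^ 2 = 1 := by rw [← cnorm_sq, hg₁u]; norm_num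
  have ha₁sq : ∑ j, ‖a₁ j‖ ^ 2 = 1 := by rw [← cnorm_sq, ha₁n]; norm_num
  have hfrob : frobSq W = σ ^ 2 := by
    unfold frobSq
    rw [hW]
    have key : ∀ i j, ‖((σ : ℂ) • Matrix.vecMulVec g₁ (star a₁)) i j‖ ^ 2
        = σ ^ 2 * (‖g₁ i‖ ^ 2 * ‖a₁ j‖ ^ 2) := by
      intro i j
      simp only [Matrix.smul_apply, Matrix.vecMulVec_apply, smul_eq_mul, norm_mul,
        Complex.norm_real, Real.norm_eq_abs, Pi.star_apply, norm_star, mul_pow, sq_abs]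
    simp only [key, ← Finset.mul_sum]
    rw [← Finset.sum_mul, hg₁sq, ha₁sq]
    ring
  have hWun : cnorm (W.mulVec u) = σ * α := by
    rw [hWu, cnorm_smul, hg₁u, Complex.norm_real, Real.norm_eq_abs,
      abs_of_nonneg (by positivity), mul_one]
  have hcons : P₁ * cnorm (W.mulVec u) ^ 2 + frobSq W = 1 := by
    rw [hWun, hfrob]
    linear_combination hs
  have hnum : dotProduct (star f₁) (H₂.mulVec (W.mulVec u)) = ((σ * α * β : ℝ) : ℂ) := by
    rw [hWu, Matrix.mulVec_smul, dotProduct_smul, hdotfv, smul_eq_mul]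
    push_cast
    ring
  have hWH : W.conjTranspose = (σ : ℂ) • Matrix.vecMulVec a₁ (star g₁) := by
    rw [hW]
    ext i j
    simp only [Matrix.conjTranspose_apply, Matrix.smul_apply, Matrix.vecMulVec_apply,
      smul_eq_mul, star_mul, star_star, Pi.star_apply, Complex.star_def, Complex.conj_ofReal,
      Complex.conj_conj]
    ring
  have hden : W.conjTranspose.mulVec (H₂.conjTranspose.mulVec f₁) = ((σ * β : ℝ) : ℂ) • a₁ := by
    rw [hWH, Matrix.smul_mulVec, vecMulVec_mulVec]
    rw [Matrix.dotProduct_mulVec, ← Matrix.star_mulVec, ← hv, hdotvf, smul_smul]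
    norm_cast
  have hdenn : cnorm (W.conjTranspose.mulVec (H₂.conjTranspose.mulVec f₁)) = σ * β := by
    rw [hden, cnorm_smul, ha₁n, Complex.norm_real, Real.norm_eq_abs,
      abs_of_nonneg (by positivity), mul_one]
  refine ⟨hb₁u, hf₁n, hcons, ?_⟩
  rw [hnum, hdenn, Complex.norm_real, Real.norm_eq_abs, abs_of_nonneg (by positivity),
    hγ₁def, hγ₂def]
  rw [div_eq_div_iff (by positivity) (by positivity)]
  linear_combination (P₁ * P₂ * α ^ 2 * β ^ 2) * hs
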